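/- Let r ∈ (0,1), s = sqrt(1 - r^2), and k ≥ 1 a natural number. If r ∈ [1/(k+2), 1/(k+1)), then the set of pairs of natural numbers (m,l) with (m,l) ≠ (0,0) and m^2 s^2 + l^2 r^2 - 1 < 0 is exactly {(0,l) : 2 ≤ l ≤ k+1}, hence has cardinality k. -/
import Mathlib

/-- Eigenvalue of the stability operator `L_r` at the Clifford torus on the
Fourier mode `A_{m,l}`. -/
noncomputable def cliffordEigenvalue (r s : ℝ) (m l : ℕ) : ℝ :=
  (((m : ℝ) ^ 4 - (m : ℝ) ^ 2) * s ^ 4 + ((l : ℝ) ^ 4 - (l : ℝ) ^ 2) * r ^ 4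
      + 2 * (m : ℝ) ^ 2 * (l : ℝ) ^ 2 * r ^ 2 * s ^ 2)
    * ((m : ℝ) ^ 2 * s ^ 2 + (l : ℝ) ^ 2 * r ^ 2 - 1)
    / (r ^ 4 * s ^ 4 * ((m : ℝ) ^ 2 * s ^ 2 + (l : ℝ) ^ 2 * r ^ 2))

lemma nat_sq_le_fourth (m : ℕ) : (m:ℝ)^2 ≤ (m:ℝ)^4 := by
  have h : m^2 ≤ m^4 := by
    rcases Nat.eq_zero_or_pos m with h|h
    · simp [h]
    · exact Nat.pow_le_pow_right h (by norm_num)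
  exact_mod_cast h

set_option maxHeartbeats 1000000 in
theorem stmt_8 (r : ℝ) (hr : r ∈ Set.Ioo (0 : ℝ) 1) (s : ℝ)
    (hs : s = Real.sqrt (1 - r ^ 2)) (k : ℕ) (hk : 1 ≤ k)
    (hrange : r ∈ Set.Ico (1 / ((k : ℝ) + 2)) (1 / ((k : ℝ) + 1))) :
    {p : ℕ × ℕ | p ≠ (0, 0) ∧ cliffordEigenvalue r s p.1 p.2 < 0}
      = {p : ℕ × ℕ | p.1 = 0 ∧ 2 ≤ p.2 ∧ p.2 ≤ k + 1} ∧
    {p : ℕ × ℕ | p ≠ (0, 0) ∧ cliffordEigenvalue r s p.1 p.2 < 0}.ncard = k := by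
  obtain ⟨hr0, hr1⟩ := hr
  obtain ⟨hlo, hhi⟩ := hrange
  have hk1 : (1:ℝ) ≤ (k:ℝ) := by exact_mod_cast hk
  have hkpos : (0:ℝ) < (k:ℝ) + 1 := by linarith
  have hk2pos : (0:ℝ) < (k:ℝ) + 2 := by linarith
  have hr2 : r ^ 2 < 1 := by nlinarith
  have hs2 : s ^ 2 = 1 - r ^ 2 := by
    rw [hs, Real.sq_sqrt]; linarith
  have hspos : 0 < s := by
    rw [hs]; exact Real.sqrt_pos.2 (by linarith)
  have hrk1 : r * ((k:ℝ) + 1) < 1 := (lt_div_iff₀ hkpos).mp hhi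
  have hrk2 : (1:ℝ) ≤ r * ((k:ℝ) + 2) := by
    have := (div_le_iff₀ hk2pos).mp hlo
    linarith
  have hrhalf : r < 1 / 2 := by nlinarith
  clear hs hlo hhi
  have hkey : {p : ℕ × ℕ | p ≠ (0, 0) ∧ cliffordEigenvalue r s p.1 p.2 < 0}
      = {p : ℕ × ℕ | p.1 = 0 ∧ 2 ≤ p.2 ∧ p.2 ≤ k + 1} := by
    ext ⟨m, l⟩
    simp only [Set.mem_setOf_eq, ne_eq, Prod.mk.injEq, not_and]
    constructor
    · rintro ⟨hne, hneg⟩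
      have hden : 0 < (m:ℝ)^2*s^2+(l:ℝ)^2*r^2 := by
        rcases Nat.eq_zero_or_pos m with hm | hm
        · have hL : (1:ℝ) ≤ (l:ℝ) := by
            exact_mod_cast Nat.one_le_iff_ne_zero.2 (hne hm)
          have h := mul_pos (pow_pos (show (0:ℝ) < (l:ℝ) by linarith) 2) (pow_pos hr0 2)
          subst hm
          push_cast
          nlinarith [h, sq_nonneg s]
        · have hM : (1:ℝ) ≤ (m:ℝ) := by exact_mod_cast hm
          have h := mul_pos (pow_pos (show (0:ℝ) < (m:ℝ) by linarith) 2) (pow_pos hspos 2)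
          have h2 := mul_nonneg (sq_nonneg (l:ℝ)) (sq_nonneg r)
          linarith
      have hC : 0 < r ^ 4 * s ^ 4 * ((m:ℝ)^2*s^2+(l:ℝ)^2*r^2) := by positivity
      unfold cliffordEigenvalue at hneg
      have hnum : (((m : ℝ) ^ 4 - (m : ℝ) ^ 2) * s ^ 4 + ((l : ℝ) ^ 4 - (l : ℝ) ^ 2) * r ^ 4
          + 2 * (m : ℝ) ^ 2 * (l : ℝ) ^ 2 * r ^ 2 * s ^ 2)
          * ((m : ℝ) ^ 2 * s ^ 2 + (l : ℝ) ^ 2 * r ^ 2 - 1) < 0 := by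
        rcases div_neg_iff.mp hneg with ⟨_, h2⟩ | ⟨h1, _⟩
        · linarith
        · exact h1
      have hA : 0 ≤ ((m : ℝ) ^ 4 - (m : ℝ) ^ 2) * s ^ 4 + ((l : ℝ) ^ 4 - (l : ℝ) ^ 2) * r ^ 4
          + 2 * (m : ℝ) ^ 2 * (l : ℝ) ^ 2 * r ^ 2 * s ^ 2 := by
        have h1 := mul_nonneg (sub_nonneg.2 (nat_sq_le_fourth m)) (pow_nonneg hspos.le 4)
        have h2 := mul_nonneg (sub_nonneg.2 (nat_sq_le_fourth l)) (pow_nonneg hr0.le 4)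
        have h3 := mul_nonneg (mul_nonneg (sq_nonneg (m:ℝ)) (sq_nonneg (l:ℝ)))
          (mul_nonneg (sq_nonneg r) (sq_nonneg s))
        linarith
      have hApos : 0 < ((m : ℝ) ^ 4 - (m : ℝ) ^ 2) * s ^ 4 + ((l : ℝ) ^ 4 - (l : ℝ) ^ 2) * r ^ 4
          + 2 * (m : ℝ) ^ 2 * (l : ℝ) ^ 2 * r ^ 2 * s ^ 2 := by
        rcases mul_neg_iff.mp hnum with ⟨h1, _⟩ | ⟨h1, _⟩
        · exact h1
        · linarith
      have hB : (m : ℝ) ^ 2 * s ^ 2 + (l : ℝ) ^ 2 * r ^ 2 - 1 < 0 := by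
        rcases mul_neg_iff.mp hnum with ⟨_, h2⟩ | ⟨h1, _⟩
        · exact h2
        · linarith
      clear hneg hnum hA hC hden
      -- first show m = 0
      have hm0 : m = 0 := by
        by_contra hm
        have hM : (1:ℝ) ≤ (m:ℝ) := by
          exact_mod_cast Nat.one_le_iff_ne_zero.2 hm
        -- l must be 0
        have hl0 : l = 0 := by
          by_contra hl
          have hL : (1:ℝ) ≤ (l:ℝ) := by
            exact_mod_cast Nat.one_le_iff_ne_zero.2 hl
          have e1 : (0:ℝ) ≤ ((m:ℝ)^2 - 1) * s^2 :=
            mul_nonneg (by nlinarith) (sq_nonneg s)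
          have e2 : (0:ℝ) ≤ ((l:ℝ)^2 - 1) * r^2 :=
            mul_nonneg (by nlinarith) (sq_nonneg r)
          nlinarith [e1, e2]
        subst hl0
        push_cast at hB hApos
        -- then m = 1
        have hm1 : m = 1 := by
          have hm2 : (m:ℝ) < 2 := by
            by_contra hM2
            push_neg at hM2
            have e1 : (0:ℝ) ≤ ((m:ℝ)^2 - 4) * s^2 :=
              mul_nonneg (by nlinarith) (sq_nonneg s)
            nlinarith [e1, mul_pos hr0 hr0]
          have : m < 2 := by exact_mod_cast hm2
          omega
        subst hm1
        push_cast at hApos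
        nlinarith [hApos]
      subst hm0
      push_cast at hB hApos
      refine ⟨rfl, ?_, ?_⟩
      · by_contra hl
        push_neg at hl
        interval_cases l
        · exact hne rfl rfl
        · push_cast at hApos; nlinarith [hApos]
      · by_contra hl
        push_neg at hl
        have hL : (k:ℝ) + 2 ≤ (l:ℝ) := by
          have : k + 2 ≤ l := by omega
          exact_mod_cast this
        have h1 : (1:ℝ) ≤ (l:ℝ) * r := by nlinarith [mul_nonneg (sub_nonneg.2 hL) hr0.le]
        nlinarith [h1, mul_pos hr0 (show (0:ℝ) < (l:ℝ) by linarith)]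
    · rintro ⟨hm, hl2, hlk⟩
      subst hm
      have hL2 : (2:ℝ) ≤ (l:ℝ) := by exact_mod_cast hl2
      have hLk : (l:ℝ) ≤ (k:ℝ) + 1 := by exact_mod_cast hlk
      have hLpos : (0:ℝ) < (l:ℝ) := by linarith
      refine ⟨fun _ h => by omega, ?_⟩
      unfold cliffordEigenvalue
      push_cast
      apply div_neg_of_neg_of_pos
      · apply mul_neg_of_pos_of_neg
        · have h4 : (4:ℝ) ≤ (l:ℝ)^2 := by nlinarith
          have h5 : (0:ℝ) < (l:ℝ)^4 - (l:ℝ)^2 := by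
            nlinarith [sq_nonneg ((l:ℝ)^2 - 4)]
          nlinarith [mul_pos h5 (pow_pos hr0 4), sq_nonneg s]
        · have h1 : (l:ℝ) * r < 1 := by
            nlinarith [mul_nonneg (sub_nonneg.2 hLk) hr0.le]
          nlinarith [mul_pos hLpos hr0, h1, sq_nonneg s]
      · positivity
  refine ⟨hkey, ?_⟩
  rw [hkey]
  have himg : {p : ℕ × ℕ | p.1 = 0 ∧ 2 ≤ p.2 ∧ p.2 ≤ k + 1}
      = ↑((Finset.Icc 2 (k+1)).image (fun l => ((0:ℕ), l))) := by
    ext ⟨m, l⟩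
    simp only [Set.mem_setOf_eq, Finset.coe_image, Set.mem_image, Finset.mem_coe,
      Finset.mem_Icc, Prod.mk.injEq]
    constructor
    · rintro ⟨rfl, h2, hk'⟩
      exact ⟨l, ⟨h2, hk'⟩, rfl, rfl⟩
    · rintro ⟨a, ⟨h2, hk'⟩, rfl, rfl⟩
      exact ⟨rfl, h2, hk'⟩
  rw [himg, Set.ncard_coe_finset,
    Finset.card_image_of_injective _ (fun a b h => by simpa using h), Nat.card_Icc]
  omega
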